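/- (Grace–Walsh–Szegő, closed disk case) Let f : ℂⁿ → ℂ be a polynomial in n variables z₁, …, zₙ which is affine (degree at most 1) in each variable separately and is invariant under every permutation of the variables. Let D = {z ∈ ℂ : |z - c| ≤ r} be a closed disk, and let ζ₁, …, ζₙ ∈ D. Then there exists ζ ∈ D such that f(ζ₁, …, ζₙ) = f(ζ, …, ζ). -/

import Mathlib

/-- Cauchy–Schwarz for multisets of reals. -/
lemma gws_multiset_sq_sum_le (M : Multiset ℝ) :
    M.sum ^ 2 ≤ (M.card : ℝ) * (M.map (fun x => x ^ 2)).sum := by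
  induction M using Multiset.induction_on with
  | empty => simp
  | cons a M ih =>
    by_cases hM : M = 0
    · simp [hM]
    simp only [Multiset.sum_cons, Multiset.card_cons, Multiset.map_cons]
    push_cast
    have hQ : (0:ℝ) ≤ (M.map (fun x => x ^ 2)).sum := by
      apply Multiset.sum_nonneg
      intro x hx
      obtain ⟨y, _, rfl⟩ := Multiset.mem_map.mp hx
      positivity
    have hkpos : (0:ℝ) < (M.card : ℝ) := by
      have : M.card ≠ 0 := by simpa [Multiset.card_eq_zero] using hM
      positivity
    set k := (M.card : ℝ) with hk
    set S := M.sum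
    set Q := (M.map (fun x => x ^ 2)).sum
    have key : 0 ≤ k * ((k+1)*(a^2+Q) - (a+S)^2) := by nlinarith [sq_nonneg (k*a - S)]
    nlinarith [key, hkpos]

lemma gws_sum_lt_card (M : Multiset ℝ) : M ≠ 0 → (∀ x ∈ M, x < 1) →
    M.sum < (M.card : ℝ) := by
  induction M using Multiset.induction_on with
  | empty => intro hM _; exact absurd rfl hM
  | cons a M ih =>
    intro _ h
    simp only [Multiset.sum_cons, Multiset.card_cons]
    push_cast
    by_cases hM0 : M = 0
    · have h1 := h a (Multiset.mem_cons_self a M)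
      subst hM0
      simpa using h1
    · have h1 := h a (Multiset.mem_cons_self a M)
      have h2 := ih hM0 (fun x hx => h x (Multiset.mem_cons_of_mem hx))
      linarith

/-- The geometric averaging step: if every element of `V` lies in the open region
`{u : t‖u‖² + 2Re(δu) < 1}` (which is convex and contains 0), and `N • u₀` is the sum
of `V` with `V.card ≤ N`, then `u₀` is in the region too. -/
lemma gws_geom (t : ℝ) (ht : 0 ≤ t) (δ : ℂ) (N : ℕ) (hN : 0 < N) (V : Multiset ℂ)
    (hVne : V ≠ 0) (hVcard : Multiset.card V ≤ N)
    (hlt : ∀ u ∈ V, t * Complex.normSq u + 2 * (δ * u).re < 1)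
    (u0 : ℂ) (hu0 : (N : ℂ) * u0 = V.sum) :
    t * Complex.normSq u0 + 2 * (δ * u0).re < 1 := by
  set S : ℂ := V.sum with hSdef
  set m : ℕ := Multiset.card V with hmdef
  set P2 : ℝ := (V.map Complex.normSq).sum with hP2def
  set W : ℝ := (V.map (fun u => (δ * u).re)).sum with hWdef
  have hm1 : 1 ≤ m := by
    rw [hmdef, Nat.one_le_iff_ne_zero]
    simpa [Multiset.card_eq_zero] using hVne
  have hP2nn : 0 ≤ P2 := by
    apply Multiset.sum_nonneg
    intro x hx
    obtain ⟨y, _, rfl⟩ := Multiset.mem_map.mp hx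
    exact Complex.normSq_nonneg y
  -- sum of the strict inequalities
  have hsum_lt : t * P2 + 2 * W < (m : ℝ) := by
    have hcard : Multiset.card (V.map (fun u => t * Complex.normSq u + 2 * (δ * u).re)) = m :=
      Multiset.card_map _ _
    have h := gws_sum_lt_card (V.map (fun u => t * Complex.normSq u + 2 * (δ * u).re))
      (by simpa [Multiset.map_eq_zero] using hVne)
      (by
        intro x hx
        obtain ⟨u, hu, rfl⟩ := Multiset.mem_map.mp hx
        exact hlt u hu)
    rw [hcard] at h
    have hsplit : (V.map (fun u => t * Complex.normSq u + 2 * (δ * u).re)).sum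
        = t * P2 + 2 * W := by
      rw [hP2def, hWdef, ← Multiset.sum_map_mul_left, ← Multiset.sum_map_mul_left,
        ← Multiset.sum_map_add]
    rw [hsplit] at h
    exact h
  -- Cauchy–Schwarz : normSq S ≤ m * P2
  have hCS : Complex.normSq S ≤ (m : ℝ) * P2 := by
    have h1 : ‖S‖ ≤ (V.map (fun u => ‖u‖)).sum := by
      simpa [hSdef] using norm_multiset_sum_le V
    have h2 := gws_multiset_sq_sum_le (V.map (fun u => ‖u‖))
    rw [Multiset.card_map, Multiset.map_map] at h2
    have h3 : (V.map (fun u => ‖u‖ ^ 2)).sum = P2 := by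
      rw [hP2def]
      exact congr_arg _ (Multiset.map_congr rfl fun x _ => Complex.sq_norm x)
    have habs : 0 ≤ ‖S‖ := norm_nonneg S
    have hsumabs : 0 ≤ (V.map (fun u => ‖u‖)).sum := le_trans habs h1
    have h4 : (V.map ((fun u => ‖u‖) ∘ fun x => x)).sum = (V.map (fun u => ‖u‖)).sum := rfl
    rw [← Complex.sq_norm]
    calc ‖S‖ ^ 2 ≤ ((V.map (fun u => ‖u‖)).sum) ^ 2 := by nlinarith
      _ ≤ (m : ℝ) * P2 := by
          rw [← h3]
          exact h2
  -- real part of the sum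
  have hre : (δ * S).re = W := by
    have h1 : (V.map (fun u => δ * u)).sum = δ * S := by
      simpa [Multiset.map_id'] using Multiset.sum_map_mul_left (s := V) (a := δ) (f := fun x => x)
    rw [← h1, hWdef]
    have := map_multiset_sum Complex.reAddGroupHom (V.map (fun u => δ * u))
    simpa [Multiset.map_map, Complex.coe_reAddGroupHom, Function.comp] using this
  -- transfer to u0
  have hNR : (0:ℝ) < (N:ℝ) := by exact_mod_cast hN
  have hnsq : Complex.normSq S = (N:ℝ)^2 * Complex.normSq u0 := by
    rw [← hu0, Complex.normSq_mul, Complex.normSq_natCast]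
    ring
  have hreu : W = (N:ℝ) * (δ * u0).re := by
    rw [← hre, ← hu0]
    rw [show δ * ((N:ℂ) * u0) = (N:ℂ) * (δ * u0) by ring]
    simp [Complex.mul_re]
  have hmN : (m:ℝ) ≤ (N:ℝ) := by exact_mod_cast hVcard
  -- final arithmetic
  have key : (N:ℝ)^2 * (t * Complex.normSq u0 + 2 * (δ * u0).re)
      = t * Complex.normSq S + 2 * (N:ℝ) * W := by
    rw [hnsq, hreu]; ring
  have step1 : t * Complex.normSq S ≤ t * ((m:ℝ) * P2) := mul_le_mul_of_nonneg_left hCS ht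
  have step2 : t * ((m:ℝ) * P2) ≤ t * ((N:ℝ) * P2) :=
    mul_le_mul_of_nonneg_left (mul_le_mul_of_nonneg_right hmN hP2nn) ht
  have step3 : (N:ℝ) * (t * P2 + 2 * W) < (N:ℝ) * m := by nlinarith
  nlinarith [key, step1, step2, step3, hmN, hNR]

open Polynomial Metric in
/-- Laguerre-type lemma for closed disks. -/
lemma gws_laguerre (N : ℕ) (hN : 0 < N) (q : Polynomial ℂ) (hdeg : q.natDegree ≤ N)
    (c : ℂ) (r : ℝ) (hq : ∀ x ∈ closedBall c r, q.eval x ≠ 0)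
    (z w : ℂ) (hz : z ∈ closedBall c r) (hw : w ∈ closedBall c r) :
    q.eval w + (z - w) * (Polynomial.derivative q).eval w / N ≠ 0 := by
  intro h0
  have hqw : q.eval w ≠ 0 := hq w hw
  have hNC : (N : ℂ) ≠ 0 := Nat.cast_ne_zero.mpr hN.ne'
  have h1 : (z - w) * (Polynomial.derivative q).eval w = - (N : ℂ) * q.eval w := by
    field_simp at h0
    linear_combination h0
  have hprod : (z - w) * (Polynomial.derivative q).eval w ≠ 0 := by
    rw [h1]; exact mul_ne_zero (neg_ne_zero.mpr hNC) hqw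
  have hzw : z - w ≠ 0 := left_ne_zero_of_mul hprod
  have hq'w : (Polynomial.derivative q).eval w ≠ 0 := right_ne_zero_of_mul hprod
  have hq0 : q ≠ 0 := fun h => hqw (by simp [h])
  have hroots : q.roots.card = q.natDegree :=
    Polynomial.splits_iff_card_roots.mp (IsAlgClosed.splits q)
  set R := q.roots with hR
  have hm1 : 1 ≤ Multiset.card R := by
    by_contra h
    have h' : Multiset.card R = 0 := by omega
    have hnd : q.natDegree = 0 := by rw [← hroots, h']
    have : Polynomial.derivative q = 0 := by
      rw [Polynomial.eq_C_of_natDegree_eq_zero hnd]; simp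
    exact hq'w (by rw [this]; simp)
  have hroot_out : ∀ ρ ∈ R, r < dist ρ c := by
    intro ρ hρ
    by_contra h
    push_neg at h
    exact hq ρ (mem_closedBall.mpr h) ((Polynomial.mem_roots hq0).mp hρ)
  have hwρ : ∀ ρ ∈ R, w - ρ ≠ 0 := by
    intro ρ hρ h
    have : ρ = w := by linear_combination -h
    subst this
    exact absurd (mem_closedBall.mp hw) (not_le.mpr (hroot_out _ hρ))
  -- log-derivative sum
  set L := q.leadingCoeff with hL
  have hfac := Polynomial.C_leadingCoeff_mul_prod_multiset_X_sub_C (p := q) hroots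
  set S := (R.map (fun ρ => (w - ρ)⁻¹)).sum with hS
  have hkey : (Polynomial.derivative q).eval w = q.eval w * S := by
    have hder : Polynomial.derivative q
        = Polynomial.C L * (R.map (fun ρ =>
            (Multiset.map (fun a => X - Polynomial.C a) (R.erase ρ)).prod)).sum := by
      conv_lhs => rw [← hfac]
      rw [derivative_mul, derivative_C, zero_mul, zero_add, Polynomial.derivative_prod]
      congr 1
      apply congr_arg
      apply Multiset.map_congr rfl
      intro ρ hρ
      rw [derivative_X_sub_C, mul_one]
    have hevalq : q.eval w = L * (R.map (fun ρ => w - ρ)).prod := by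
      conv_lhs => rw [← hfac]
      rw [eval_mul, eval_C, Polynomial.eval_multiset_prod, Multiset.map_map]
      simp [Function.comp, hL, hR]
    have hesum : ∀ s : Multiset (Polynomial ℂ),
        Polynomial.eval w s.sum = (s.map (Polynomial.eval w)).sum := fun s => by
      simpa using map_multiset_sum (Polynomial.evalRingHom w) s
    rw [hder, eval_mul, eval_C, hesum, Multiset.map_map, hS,
      ← Multiset.sum_map_mul_left, ← Multiset.sum_map_mul_left]
    apply congr_arg
    apply Multiset.map_congr rfl
    intro ρ hρ
    have herase : (R.map (fun ρ' => w - ρ')).prod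
        = (w - ρ) * ((R.erase ρ).map (fun ρ' => w - ρ')).prod := by
      conv_lhs => rw [← Multiset.cons_erase hρ]
      rw [Multiset.map_cons, Multiset.prod_cons]
    have hne := hwρ ρ hρ
    rw [Function.comp_apply, Polynomial.eval_multiset_prod, Multiset.map_map]
    have hcomp : (Multiset.map (Polynomial.eval w ∘ fun a => X - Polynomial.C a)
        (R.erase ρ)).prod = (Multiset.map (fun ρ' => w - ρ') (R.erase ρ)).prod := by
      apply congr_arg
      apply Multiset.map_congr rfl
      intro x hx
      simp
    rw [hcomp, hevalq, herase, mul_comm (w - ρ), ← mul_assoc, mul_assoc,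
      mul_inv_cancel₀ hne, mul_one]
  -- the sum equation : N * (w - z)⁻¹ = S
  have hSeq : (N : ℂ) * (w - z)⁻¹ = S := by
    have h2 : (z - w) * (q.eval w * S) = - (N:ℂ) * q.eval w := by rw [← hkey]; exact h1
    have hwz : w - z ≠ 0 := fun h => hzw (by linear_combination -h)
    have h3 : (z - w) * S = -(N:ℂ) := by
      apply mul_left_cancel₀ hqw
      linear_combination h2
    field_simp
    linear_combination h3
  -- geometric part
  have hr0 : 0 ≤ r := le_trans dist_nonneg (mem_closedBall.mp hw)
  set δ : ℂ := w - c with hδdef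
  have hδ : Complex.normSq δ ≤ r ^ 2 := by
    have hd : dist w c ≤ r := mem_closedBall.mp hw
    rw [Complex.dist_eq] at hd
    rw [← Complex.sq_norm]
    nlinarith [norm_nonneg (w - c)]
  set t : ℝ := r ^ 2 - Complex.normSq δ with htdef
  have ht : 0 ≤ t := by rw [htdef]; linarith
  have hpoint : ∀ x : ℂ, w - x ≠ 0 →
      (t * Complex.normSq ((w - x)⁻¹) + 2 * (δ * (w - x)⁻¹).re - 1) * Complex.normSq (w - x)
        = r ^ 2 - Complex.normSq (x - c) := by
    intro x hwx
    have hxc : (x - c) * (w - x)⁻¹ = δ * (w - x)⁻¹ - 1 := by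
      rw [hδdef]
      field_simp
      try ring
    have e1 : Complex.normSq (x - c) * Complex.normSq ((w - x)⁻¹)
        = Complex.normSq (δ * (w - x)⁻¹ - 1) := by
      rw [← Complex.normSq_mul, hxc]
    have e2 : Complex.normSq (δ * (w - x)⁻¹ - 1)
        = Complex.normSq δ * Complex.normSq ((w - x)⁻¹)
            - 2 * (δ * (w - x)⁻¹).re + 1 := by
      rw [Complex.normSq_sub, Complex.normSq_mul]
      simp only [map_one, mul_one, Complex.normSq_one]
      try ring
    have e3 : Complex.normSq ((w - x)⁻¹) * Complex.normSq (w - x) = 1 := by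
      rw [← Complex.normSq_mul, inv_mul_cancel₀ hwx, Complex.normSq_one]
    have hnz : 0 < Complex.normSq (w - x) := Complex.normSq_pos.mpr hwx
    rw [e2] at e1
    rw [htdef]
    linear_combination Complex.normSq (w - x) * e1 + (r ^ 2 - Complex.normSq (x - c)) * e3
  have hg_lt : ∀ u ∈ R.map (fun ρ => (w - ρ)⁻¹),
      t * Complex.normSq u + 2 * (δ * u).re < 1 := by
    intro u hu
    obtain ⟨ρ, hρ, rfl⟩ := Multiset.mem_map.mp hu
    have hwx := hwρ ρ hρ
    have hout : r ^ 2 < Complex.normSq (ρ - c) := by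
      have h' := hroot_out ρ hρ
      rw [Complex.dist_eq] at h'
      rw [← Complex.sq_norm]
      nlinarith
    have hp := hpoint ρ hwx
    have hnz : 0 < Complex.normSq (w - ρ) := Complex.normSq_pos.mpr hwx
    nlinarith
  have hwz : w - z ≠ 0 := fun h => hzw (by linear_combination -h)
  have hg_ge : 1 ≤ t * Complex.normSq ((w - z)⁻¹) + 2 * (δ * (w - z)⁻¹).re := by
    have hin : Complex.normSq (z - c) ≤ r ^ 2 := by
      have hd : dist z c ≤ r := mem_closedBall.mp hz
      rw [Complex.dist_eq] at hd
      rw [← Complex.sq_norm]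
      nlinarith [norm_nonneg (z - c)]
    have hp := hpoint z hwz
    have hnz : 0 < Complex.normSq (w - z) := Complex.normSq_pos.mpr hwz
    nlinarith
  have hfinal := gws_geom t ht δ N hN (R.map (fun ρ => (w - ρ)⁻¹))
    (by
      simp only [Ne, Multiset.map_eq_zero]
      intro h
      rw [h] at hm1
      simp at hm1)
    (by rw [Multiset.card_map]; omega)
    hg_lt ((w - z)⁻¹) (by rw [hSeq])
  linarith

open MvPolynomial in
lemma gws_eval_diag {m : ℕ} (Q : MvPolynomial (Fin m) ℂ) (w : ℂ) :
    MvPolynomial.eval (fun _ => w) Q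
      = Polynomial.eval w
          (MvPolynomial.aeval (fun _ : Fin m => (Polynomial.X : Polynomial ℂ)) Q) := by
  induction Q using MvPolynomial.induction_on with
  | C a => simp
  | add p q hp hq => simp [hp, hq]
  | mul_X p i h => simp [h]

open MvPolynomial in
lemma gws_derivative_diag {m : ℕ} (Q : MvPolynomial (Fin m) ℂ) :
    Polynomial.derivative
        (MvPolynomial.aeval (fun _ : Fin m => (Polynomial.X : Polynomial ℂ)) Q)
      = ∑ i : Fin m, MvPolynomial.aeval (fun _ : Fin m => (Polynomial.X : Polynomial ℂ))
          (MvPolynomial.pderiv i Q) := by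
  induction Q using MvPolynomial.induction_on with
  | C a => simp
  | add p q hp hq => simp [hp, hq, Finset.sum_add_distrib]
  | mul_X p i h =>
    have hsum : ∀ j : Fin m,
        MvPolynomial.aeval (fun _ : Fin m => (Polynomial.X : Polynomial ℂ))
          (MvPolynomial.pderiv j (p * X i))
        = MvPolynomial.aeval (fun _ : Fin m => (Polynomial.X : Polynomial ℂ))
            (MvPolynomial.pderiv j p) * Polynomial.X
          + (if j = i then MvPolynomial.aeval
              (fun _ : Fin m => (Polynomial.X : Polynomial ℂ)) p else 0) := by
      intro j
      rcases eq_or_ne j i with rfl | hji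
      · rw [pderiv_mul, pderiv_X_self, mul_one, map_add, map_mul, aeval_X, if_pos rfl]
      · rw [pderiv_mul, pderiv_X_of_ne (Ne.symm hji), mul_zero, add_zero, map_mul, aeval_X,
          if_neg hji, add_zero]
    rw [map_mul, aeval_X, Polynomial.derivative_mul, Polynomial.derivative_X, mul_one, h,
      Finset.sum_congr rfl (fun j _ => hsum j), Finset.sum_add_distrib, Finset.sum_ite_eq',
      Finset.sum_mul]
    simp [add_comm]

open MvPolynomial in
lemma gws_natDegree_diag {m : ℕ} (Q : MvPolynomial (Fin m) ℂ)
    (haff : ∀ i : Fin m, Q.degreeOf i ≤ 1) :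
    (MvPolynomial.aeval (fun _ : Fin m => (Polynomial.X : Polynomial ℂ)) Q).natDegree ≤ m := by
  conv_lhs => rw [Q.as_sum]
  rw [map_sum]
  apply Polynomial.natDegree_sum_le_of_forall_le
  intro u hu
  rw [aeval_monomial]
  have : (u.prod fun (_ : Fin m) (e : ℕ) => (Polynomial.X : Polynomial ℂ) ^ e)
      = Polynomial.X ^ (∑ i ∈ u.support, u i) := by
    rw [Finsupp.prod]
    exact Finset.prod_pow_eq_pow_sum _ _ _
  rw [this]
  apply le_trans (Polynomial.natDegree_mul_le)
  have h1 : (algebraMap ℂ (Polynomial ℂ) (coeff u Q)).natDegree = 0 :=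
    Polynomial.natDegree_C _
  rw [h1, zero_add, Polynomial.natDegree_X_pow]
  have hle : ∀ i : Fin m, u i ≤ 1 := by
    intro i
    calc u i ≤ Q.degreeOf i := by
          rw [MvPolynomial.degreeOf_eq_sup]
          exact Finset.le_sup (f := fun v : Fin m →₀ ℕ => v i) hu
      _ ≤ 1 := haff i
  calc ∑ i ∈ u.support, u i ≤ ∑ i : Fin m, u i :=
        Finset.sum_le_sum_of_subset (Finset.subset_univ _)
    _ ≤ ∑ _i : Fin m, 1 := Finset.sum_le_sum (fun i _ => hle i)
    _ = m := by simp

open MvPolynomial in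
lemma gws_pderiv_zero_rename {m : ℕ} (A : MvPolynomial (Fin m) ℂ) :
    MvPolynomial.pderiv 0 (MvPolynomial.rename Fin.succ A) = 0 := by
  induction A using MvPolynomial.induction_on with
  | C a => simp
  | add p q hp hq => simp [hp, hq]
  | mul_X p i h =>
    rw [map_mul, rename_X, pderiv_mul, h, zero_mul, zero_add,
      pderiv_X_of_ne (Fin.succ_ne_zero i), mul_zero]

open MvPolynomial in
lemma gws_finSuccEquiv_rename {m : ℕ} (A : MvPolynomial (Fin m) ℂ) :
    MvPolynomial.finSuccEquiv ℂ m (MvPolynomial.rename Fin.succ A) = Polynomial.C A := by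
  induction A using MvPolynomial.induction_on with
  | C a =>
    rw [rename_C, finSuccEquiv_apply, eval₂Hom_C]
    simp
  | add p q hp hq => simp [hp, hq]
  | mul_X p i h => rw [map_mul, rename_X, map_mul, finSuccEquiv_X_succ, h, map_mul]

open MvPolynomial in
/-- Decomposition of a polynomial of degree ≤ 1 in the variable 0. -/
lemma gws_decomp {m : ℕ} (Q : MvPolynomial (Fin (m+1)) ℂ) (h : Q.degreeOf 0 ≤ 1) :
    ∃ A B : MvPolynomial (Fin m) ℂ,
      Q = MvPolynomial.rename Fin.succ A + MvPolynomial.X 0 * MvPolynomial.rename Fin.succ B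
      ∧ (∀ j : Fin m, A.degreeOf j ≤ Q.degreeOf j.succ)
      ∧ (∀ j : Fin m, B.degreeOf j ≤ Q.degreeOf j.succ) := by
  set P := MvPolynomial.finSuccEquiv ℂ m Q with hP
  refine ⟨P.coeff 0, P.coeff 1, ?_, ?_, ?_⟩
  · have hnd : P.natDegree ≤ 1 := by
      rw [hP, natDegree_finSuccEquiv]
      exact h
    have hXC := Polynomial.eq_X_add_C_of_natDegree_le_one hnd
    apply (MvPolynomial.finSuccEquiv ℂ m).injective
    rw [map_add, map_mul, gws_finSuccEquiv_rename, gws_finSuccEquiv_rename, finSuccEquiv_X_zero]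
    rw [← hP]
    conv_lhs => rw [hXC]
    ring
  · intro j
    exact degreeOf_coeff_finSuccEquiv Q j 0
  · intro j
    exact degreeOf_coeff_finSuccEquiv Q j 1

open MvPolynomial in
lemma gws_decomp_unique {m : ℕ} (A B A' B' : MvPolynomial (Fin m) ℂ)
    (h : MvPolynomial.rename Fin.succ A + MvPolynomial.X 0 * MvPolynomial.rename Fin.succ B
      = MvPolynomial.rename Fin.succ A' + MvPolynomial.X 0 * MvPolynomial.rename Fin.succ B') :
    A = A' ∧ B = B' := by
  have h2 := congrArg (MvPolynomial.finSuccEquiv ℂ m) h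
  rw [map_add, map_add, map_mul, map_mul, finSuccEquiv_X_zero, gws_finSuccEquiv_rename,
    gws_finSuccEquiv_rename, gws_finSuccEquiv_rename, gws_finSuccEquiv_rename] at h2
  constructor
  · have h3 := congrArg (fun p => Polynomial.coeff p 0) h2
    simpa using h3
  · have h3 := congrArg (fun p => Polynomial.coeff p 1) h2
    simpa [Polynomial.coeff_X_mul] using h3

open MvPolynomial Metric in
lemma gws_key (m : ℕ) (Q : MvPolynomial (Fin m) ℂ)
    (haff : ∀ i, Q.degreeOf i ≤ 1) (hsym : ∀ σ : Equiv.Perm (Fin m), rename σ Q = Q)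
    (c : ℂ) (r : ℝ) (hr : 0 ≤ r)
    (hQ : ∀ w ∈ closedBall c r, MvPolynomial.eval (fun _ => w) Q ≠ 0)
    (v : Fin m → ℂ) (hv : ∀ i, v i ∈ closedBall c r) :
    MvPolynomial.eval v Q ≠ 0 := by
  induction m with
  | zero =>
    have hveq : v = fun _ => c := funext (fun i => i.elim0)
    rw [hveq]
    exact hQ c (mem_closedBall_self hr)
  | succ n ih =>
    obtain ⟨A, B, hdec, hA, hB⟩ := gws_decomp Q (haff 0)
    set z := v 0 with hz
    set Qz := A + MvPolynomial.C z * B with hQzdef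
    -- symmetry of Qz
    have hABsym : ∀ σ : Equiv.Perm (Fin n), rename σ A = A ∧ rename σ B = B := by
      intro σ
      set σ' : Equiv.Perm (Fin (n+1)) := Equiv.Perm.decomposeFin.symm (0, σ) with hσ'
      have hσ'0 : σ' 0 = 0 := by simp [hσ']
      have hσ's : ∀ i : Fin n, σ' i.succ = (σ i).succ := by
        intro i
        simp [hσ']
      have hQσ : rename σ' Q = Q := hsym σ'
      rw [hdec, map_add, map_mul, rename_X, hσ'0, rename_rename, rename_rename] at hQσ
      have hcomp : (⇑σ' ∘ Fin.succ) = Fin.succ ∘ ⇑σ := funext hσ's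
      rw [hcomp, ← rename_rename, ← rename_rename (g := Fin.succ) (f := ⇑σ)] at hQσ
      exact gws_decomp_unique _ _ _ _ hQσ
    have hQzsym : ∀ σ : Equiv.Perm (Fin n), rename σ Qz = Qz := by
      intro σ
      rw [hQzdef, map_add, map_mul, rename_C, (hABsym σ).1, (hABsym σ).2]
    -- multiaffineness of Qz
    have hQzaff : ∀ i, Qz.degreeOf i ≤ 1 := by
      intro i
      refine le_trans (degreeOf_add_le _ _ _) (max_le ?_ ?_)
      · exact le_trans (hA i) (haff i.succ)
      · refine le_trans (degreeOf_mul_le _ _ _) ?_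
        rw [degreeOf_C, zero_add]
        exact le_trans (hB i) (haff i.succ)
    -- the diagonal polynomial of Q
    set q : Polynomial ℂ :=
      MvPolynomial.aeval (fun _ : Fin (n+1) => (Polynomial.X : Polynomial ℂ)) Q with hq
    have hqeval : ∀ x : ℂ, q.eval x = MvPolynomial.eval (fun _ => x) Q :=
      fun x => (gws_eval_diag Q x).symm
    have hqne : ∀ x ∈ closedBall c r, q.eval x ≠ 0 := by
      intro x hx
      rw [hqeval]
      exact hQ x hx
    have hqdeg : q.natDegree ≤ n + 1 := gws_natDegree_diag Q haff
    -- pderiv 0 Q = rename succ B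
    have hpd : MvPolynomial.pderiv 0 Q = MvPolynomial.rename Fin.succ B := by
      rw [hdec, map_add, gws_pderiv_zero_rename, pderiv_mul, pderiv_X_self,
        gws_pderiv_zero_rename, mul_zero, one_mul, zero_add, add_zero]
    -- derivative of q via symmetry
    have hder : Polynomial.derivative q = (n + 1) •
        MvPolynomial.aeval (fun _ : Fin n => (Polynomial.X : Polynomial ℂ)) B := by
      rw [hq, gws_derivative_diag]
      have hall : ∀ i : Fin (n+1),
          MvPolynomial.aeval (fun _ : Fin (n+1) => (Polynomial.X : Polynomial ℂ))
            (MvPolynomial.pderiv i Q)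
          = MvPolynomial.aeval (fun _ : Fin n => (Polynomial.X : Polynomial ℂ)) B := by
        intro i
        have hswap : MvPolynomial.pderiv i Q
            = MvPolynomial.rename (Equiv.swap (0 : Fin (n+1)) i)
                (MvPolynomial.pderiv 0 Q) := by
          have h1 := MvPolynomial.pderiv_rename
            (f := ⇑(Equiv.swap (0 : Fin (n+1)) i)) (Equiv.injective _) 0 Q
          rw [hsym (Equiv.swap (0 : Fin (n+1)) i)] at h1
          rw [← h1, Equiv.swap_apply_left]
        rw [hswap, hpd, aeval_rename, aeval_rename]
        rfl
      rw [Finset.sum_congr rfl (fun i _ => hall i), Finset.sum_const, Finset.card_univ,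
        Fintype.card_fin]
    -- diagonal of Qz equals Laguerre expression
    have hdiagQz : ∀ w : ℂ, MvPolynomial.eval (fun _ : Fin n => w) Qz
        = q.eval w + (z - w) * (Polynomial.derivative q).eval w / (n+1 : ℕ) := by
      intro w
      have ha : MvPolynomial.eval (fun _ : Fin (n+1) => w) Q
          = MvPolynomial.eval (fun _ : Fin n => w) A
            + w * MvPolynomial.eval (fun _ : Fin n => w) B := by
        rw [hdec, map_add, eval_mul, eval_X, eval_rename, eval_rename]
        rfl
      have hb : (Polynomial.derivative q).eval w
          = (n+1 : ℕ) * MvPolynomial.eval (fun _ : Fin n => w) B := by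
        rw [hder, Polynomial.eval_smul, gws_eval_diag B w]
        simp [nsmul_eq_mul]
      rw [hQzdef, map_add, eval_mul, eval_C, hqeval, ha, hb]
      have hcast : ((n:ℂ) + 1) ≠ 0 := by
        have : ((n+1 : ℕ) : ℂ) ≠ 0 := Nat.cast_ne_zero.mpr (Nat.succ_ne_zero n)
        push_cast at this
        exact this
      push_cast
      field_simp
      ring
    -- Laguerre gives nonvanishing of the diagonal of Qz
    have hQzdiag : ∀ w ∈ closedBall c r, MvPolynomial.eval (fun _ : Fin n => w) Qz ≠ 0 := by
      intro w hw
      rw [hdiagQz w]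
      exact gws_laguerre (n+1) (Nat.succ_pos n) q hqdeg c r hqne z w (hv 0) hw
    -- induction
    have hmain := ih Qz hQzaff hQzsym hQzdiag (fun i => v i.succ) (fun i => hv i.succ)
    have heq : MvPolynomial.eval v Q = MvPolynomial.eval (fun i => v i.succ) Qz := by
      rw [hdec, map_add, eval_mul, eval_X, eval_rename, eval_rename, hQzdef, map_add, eval_mul,
        eval_C]
      rfl
    rw [heq]
    exact hmain

/-- Grace–Walsh–Szegő theorem, closed-disk case: a symmetric multiaffine
polynomial `f` in `n` variables evaluated at points of a closed disk `D`
takes the same value at some diagonal point `(ζ, …, ζ)` with `ζ ∈ D`. -/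
theorem grace_walsh_szego_closedDisk (n : ℕ) (f : MvPolynomial (Fin n) ℂ)
    (haff : ∀ i : Fin n, f.degreeOf i ≤ 1)
    (hsym : ∀ σ : Equiv.Perm (Fin n), MvPolynomial.rename σ f = f)
    (c : ℂ) (r : ℝ) (hr : 0 ≤ r)
    (ζ : Fin n → ℂ) (hζ : ∀ i, ζ i ∈ Metric.closedBall c r) :
    ∃ w ∈ Metric.closedBall c r,
      MvPolynomial.eval ζ f = MvPolynomial.eval (fun _ => w) f := by
  by_contra hcon
  push_neg at hcon
  set vv : ℂ := MvPolynomial.eval ζ f with hvv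
  set Q : MvPolynomial (Fin n) ℂ := f - MvPolynomial.C vv with hQ
  have hQaff : ∀ i : Fin n, Q.degreeOf i ≤ 1 := by
    intro i
    have h1 : Q = f + MvPolynomial.C (-vv) := by
      rw [hQ, map_neg]
      ring
    rw [h1]
    refine le_trans (MvPolynomial.degreeOf_add_le _ _ _) (max_le (haff i) ?_)
    rw [MvPolynomial.degreeOf_C]
    exact Nat.zero_le 1
  have hQsym : ∀ σ : Equiv.Perm (Fin n), MvPolynomial.rename σ Q = Q := by
    intro σ
    rw [hQ, map_sub, MvPolynomial.rename_C, hsym]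
  have hQdiag : ∀ w ∈ Metric.closedBall c r,
      MvPolynomial.eval (fun _ => w) Q ≠ 0 := by
    intro w hw
    rw [hQ, map_sub, MvPolynomial.eval_C]
    exact sub_ne_zero.mpr (fun h => hcon w hw h.symm)
  have := gws_key n Q hQaff hQsym c r hr hQdiag ζ hζ
  apply this
  rw [hQ, map_sub, MvPolynomial.eval_C, hvv, sub_self]
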